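/- The linear code C̄₁ contains exactly p^{3m+1} codewords; equivalently, the F_p-linear parametrization map sending (a, b, c, h) ∈ F_q × F_q × F_q × F_p to the word (Tr(a·x^{p^l+1} + b·x² + c·x) + h)_{x ∈ F_q} is injective, so C̄₁ has dimension 3m+1 over F_p. -/

import Mathlib

open Polynomial

section Aux

variable (p : ℕ) [Fact p.Prime] (F : Type) [Field F] [Fintype F] [Algebra (ZMod p) F]

lemma myCharP : CharP F p :=
  charP_of_injective_algebraMap (algebraMap (ZMod p) F).injective p

lemma trace_frob (z : F) :
    Algebra.trace (ZMod p) F (z ^ p) = Algebra.trace (ZMod p) F z := by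
  haveI := myCharP p F
  haveI : ExpChar F p := .prime Fact.out
  let e : F ≃ₐ[ZMod p] F := AlgEquiv.ofRingEquiv (f := frobeniusEquiv F p) (fun r => by
    simp only [frobeniusEquiv_def, ← map_pow, ZMod.pow_card])
  exact Algebra.trace_eq_of_algEquiv e z

lemma trace_frob_pow (k : ℕ) (z : F) :
    Algebra.trace (ZMod p) F (z ^ p ^ k) = Algebra.trace (ZMod p) F z := by
  induction k with
  | zero => simp
  | succ n ih => rw [pow_succ, pow_mul, trace_frob, ih]

end Aux

lemma key_lemma (p m l : ℕ) [Fact p.Prime] (hodd : Odd p) (hm : 3 ≤ m) (hl : 1 ≤ l)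
    (hml : Nat.gcd m l = 1) (F : Type) [Field F] [Fintype F] [Algebra (ZMod p) F]
    (hF : Fintype.card F = p ^ m) (a b c : F) (h : ZMod p)
    (H : ∀ x : F, Algebra.trace (ZMod p) F (a * x ^ (p ^ l + 1) + b * x ^ 2 + c * x) + h = 0) :
    a = 0 ∧ b = 0 ∧ c = 0 ∧ h = 0 := by
  haveI := myCharP p F
  haveI : ExpChar F p := .prime Fact.out
  have hp : p.Prime := Fact.out
  have hp1 : 1 < p := hp.one_lt
  have hmpos : 0 < m := by omega
  -- h = 0
  have hh : h = 0 := by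
    have := H 0
    simpa using this
  have hf : ∀ x : F, Algebra.trace (ZMod p) F (a * x ^ (p ^ l + 1) + b * x ^ 2 + c * x) = 0 := by
    intro x; have := H x; rw [hh, add_zero] at this; exact this
  -- exponent bookkeeping
  set l' := l % m with hl'def
  have hl'pos : 0 < l' := by
    rcases Nat.eq_zero_or_pos l' with h0 | h0
    · exfalso
      have : m ∣ l := Nat.dvd_of_mod_eq_zero h0
      have := Nat.gcd_eq_left this
      omega
    · exact h0
  have hl'lt : l' < m := Nat.mod_lt _ hmpos
  set k := m - l' with hkdef
  have hkpos : 0 < k := by omega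
  have hklt : k < m := by omega
  have hkl' : k ≠ l' := by
    intro he
    have hm2 : m = 2 * l' := by omega
    have h1 : Nat.gcd m l = Nat.gcd l' m := Nat.gcd_rec m l
    have h2 : Nat.gcd l' m = l' := by
      rw [hm2]; exact Nat.gcd_eq_left ⟨2, by ring⟩
    omega
  -- x ^ p ^ l = x ^ p ^ l'
  have hred : ∀ x : F, x ^ p ^ l = x ^ p ^ l' := by
    intro x
    have hdecomp : p ^ l = p ^ l' * (p ^ m) ^ (l / m) := by
      rw [← pow_mul, ← pow_add]
      congr 1
      have h3 := Nat.mod_add_div l m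
      omega
    rw [hdecomp, pow_mul, ← hF, FiniteField.pow_card_pow]
  have hcard : ∀ x : F, x ^ p ^ m = x := by
    intro x; rw [← hF, FiniteField.pow_card]
  -- the linearized polynomial vanishes
  have hL : ∀ x y : F,
      Algebra.trace (ZMod p) F ((a * x ^ p ^ l' + a ^ p ^ k * x ^ p ^ k + 2 * b * x) * y) = 0 := by
    intro x y
    have e1 : Algebra.trace (ZMod p) F (a ^ p ^ k * x ^ p ^ k * y)
        = Algebra.trace (ZMod p) F (a * x * y ^ p ^ l') := by
      rw [← trace_frob_pow p F k (a * x * y ^ p ^ l')]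
      congr 1
      rw [mul_pow, mul_pow, ← pow_mul, ← pow_add]
      have : l' + k = m := by omega
      rw [this, hcard]
    have e2 : (a * x ^ p ^ l' + a ^ p ^ k * x ^ p ^ k + 2 * b * x) * y
        = (a ^ p ^ k * x ^ p ^ k * y - a * x * y ^ p ^ l')
          + ((a * (x + y) ^ (p ^ l + 1) + b * (x + y) ^ 2 + c * (x + y))
            - (a * x ^ (p ^ l + 1) + b * x ^ 2 + c * x)
            - (a * y ^ (p ^ l + 1) + b * y ^ 2 + c * y)) := by
      have hxy : (x + y) ^ (p ^ l + 1) = (x ^ p ^ l' + y ^ p ^ l') * (x + y) := by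
        rw [pow_succ, add_pow_char_pow, hred, hred]
      have hx : x ^ (p ^ l + 1) = x ^ p ^ l' * x := by rw [pow_succ, hred]
      have hy : y ^ (p ^ l + 1) = y ^ p ^ l' * y := by rw [pow_succ, hred]
      rw [hxy, hx, hy]
      ring
    rw [e2, map_add, map_sub, map_sub, map_sub, e1, hf, hf, hf]
    ring
  -- nondegeneracy of the trace form
  have hnd := traceForm_nondegenerate (ZMod p) F
  have hL0 : ∀ x : F, a * x ^ p ^ l' + a ^ p ^ k * x ^ p ^ k + 2 * b * x = 0 := by
    intro x
    exact hnd.1 _ (fun y => by rw [Algebra.traceForm_apply]; exact hL x y)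
  -- polynomial argument
  set P : F[X] := C a * X ^ p ^ l' + C (a ^ p ^ k) * X ^ p ^ k + C (2 * b) * X ^ 1 with hPdef
  have hPeval : ∀ x : F, P.eval x = 0 := by
    intro x
    simpa [hPdef] using hL0 x
  have hPdeg : P.natDegree < Fintype.card F := by
    rw [hF]
    have d1 : (C a * X ^ p ^ l' : F[X]).natDegree ≤ p ^ l' := natDegree_C_mul_X_pow_le _ _
    have d2 : (C (a ^ p ^ k) * X ^ p ^ k : F[X]).natDegree ≤ p ^ k := natDegree_C_mul_X_pow_le _ _
    have d3 : (C (2 * b) * X ^ 1 : F[X]).natDegree ≤ 1 := natDegree_C_mul_X_pow_le _ _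
    have hb1 : p ^ l' < p ^ m := Nat.pow_lt_pow_right hp1 hl'lt
    have hb2 : p ^ k < p ^ m := Nat.pow_lt_pow_right hp1 hklt
    have hb3 : 1 < p ^ m := Nat.one_lt_pow (by omega) hp1
    calc P.natDegree ≤ max (max (p ^ l') (p ^ k)) 1 := by
          refine (natDegree_add_le _ _).trans ?_
          refine max_le_max ?_ d3
          refine (natDegree_add_le _ _).trans (max_le_max d1 d2)
      _ < p ^ m := by
          simp only [max_lt_iff]
          exact ⟨⟨hb1, hb2⟩, hb3⟩
  have hP0 : P = 0 :=
    Polynomial.eq_zero_of_natDegree_lt_card_of_eval_eq_zero P Function.injective_id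
      hPeval hPdeg
  have hpl1 : p ^ l' ≠ 1 := Nat.one_lt_pow (by omega) hp1 |>.ne'
  have hpk1 : p ^ k ≠ 1 := Nat.one_lt_pow (by omega) hp1 |>.ne'
  have hpkl : p ^ k ≠ p ^ l' := fun he => hkl' (Nat.pow_right_injective hp1 he)
  have ha : a = 0 := by
    have h0 := congrArg (fun Q : F[X] => Q.coeff (p ^ l')) hP0
    simp only [hPdef, coeff_add, coeff_C_mul, coeff_X_pow, coeff_zero] at h0
    rw [if_neg (Ne.symm hpkl), if_neg hpl1] at h0
    simpa using h0
  have hb : (2 : F) * b = 0 := by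
    have h0 := congrArg (fun Q : F[X] => Q.coeff 1) hP0
    simp only [hPdef, coeff_add, coeff_C_mul, coeff_X_pow, coeff_zero] at h0
    rw [if_neg (show (1:ℕ) ≠ p ^ l' from fun he => hpl1 he.symm),
      if_neg (show (1:ℕ) ≠ p ^ k from fun he => hpk1 he.symm)] at h0
    simpa using h0
  have h2ne : (2 : F) ≠ 0 := by
    intro h2
    have : (p : ℕ) ∣ 2 := by
      rwa [← Nat.cast_ofNat (n := 2), CharP.cast_eq_zero_iff F p 2] at h2
    have h2' := Nat.le_of_dvd (by norm_num) this
    have : p ≠ 2 := by rintro rfl; exact (by norm_num : ¬ Odd 2) hodd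
    omega
  have hb0 : b = 0 := by
    rcases mul_eq_zero.mp hb with h' | h'
    · exact absurd h' h2ne
    · exact h'
  have hc : c = 0 := by
    refine hnd.1 _ (fun y => ?_)
    have := hf y
    rw [ha, hb0] at this
    rw [Algebra.traceForm_apply]
    rw [zero_mul, zero_mul, zero_add, zero_add] at this
    exact this
  exact ⟨ha, hb0, hc, hh⟩

def codeC1 (p l : ℕ) (F : Type) [Field F] [Fintype F] [Algebra (ZMod p) F] :
    Set (F → ZMod p) :=
  {w | ∃ a b c : F, ∃ h : ZMod p, ∀ x : F,
    w x = Algebra.trace (ZMod p) F (a * x ^ (p ^ l + 1) + b * x ^ 2 + c * x) + h}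

theorem stmt_0 (p m l : ℕ) [Fact p.Prime] (hodd : Odd p) (hm : 3 ≤ m) (hl : 1 ≤ l)
    (hml : Nat.gcd m l = 1) (F : Type) [Field F] [Fintype F] [Algebra (ZMod p) F]
    (hF : Fintype.card F = p ^ m) :
    Function.Injective (fun t : F × F × F × ZMod p => fun x : F =>
      Algebra.trace (ZMod p) F (t.1 * x ^ (p ^ l + 1) + t.2.1 * x ^ 2 + t.2.2.1 * x) + t.2.2.2)
    ∧ Nat.card (codeC1 p l F) = p ^ (3 * m + 1) := by
  have hinj : Function.Injective (fun t : F × F × F × ZMod p => fun x : F =>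
      Algebra.trace (ZMod p) F (t.1 * x ^ (p ^ l + 1) + t.2.1 * x ^ 2 + t.2.2.1 * x) + t.2.2.2) := by
    rintro ⟨a₁, b₁, c₁, h₁⟩ ⟨a₂, b₂, c₂, h₂⟩ heq
    simp only at heq
    have H : ∀ x : F, Algebra.trace (ZMod p) F
        ((a₁ - a₂) * x ^ (p ^ l + 1) + (b₁ - b₂) * x ^ 2 + (c₁ - c₂) * x) + (h₁ - h₂) = 0 := by
      intro x
      have hx := congrFun heq x
      have harg : (a₁ - a₂) * x ^ (p ^ l + 1) + (b₁ - b₂) * x ^ 2 + (c₁ - c₂) * x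
          = (a₁ * x ^ (p ^ l + 1) + b₁ * x ^ 2 + c₁ * x)
            - (a₂ * x ^ (p ^ l + 1) + b₂ * x ^ 2 + c₂ * x) := by ring
      rw [harg, map_sub]
      linear_combination hx
    obtain ⟨ea, eb, ec, eh⟩ := key_lemma p m l hodd hm hl hml F hF _ _ _ _ H
    have e1 : a₁ = a₂ := sub_eq_zero.mp ea
    have e2 : b₁ = b₂ := sub_eq_zero.mp eb
    have e3 : c₁ = c₂ := sub_eq_zero.mp ec
    have e4 : h₁ = h₂ := sub_eq_zero.mp eh
    rw [e1, e2, e3, e4]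
  refine ⟨hinj, ?_⟩
  have hset : codeC1 p l F = Set.range (fun t : F × F × F × ZMod p => fun x : F =>
      Algebra.trace (ZMod p) F (t.1 * x ^ (p ^ l + 1) + t.2.1 * x ^ 2 + t.2.2.1 * x) + t.2.2.2) := by
    ext w
    constructor
    · rintro ⟨a, b, c, h, hw⟩
      exact ⟨(a, b, c, h), by funext x; exact (hw x).symm⟩
    · rintro ⟨⟨a, b, c, h⟩, rfl⟩
      exact ⟨a, b, c, h, fun x => rfl⟩
  rw [hset, Nat.card_range_of_injective hinj, Nat.card_prod, Nat.card_prod, Nat.card_prod,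
    Nat.card_eq_fintype_card, hF, Nat.card_zmod,
    show 3 * m + 1 = m + (m + (m + 1)) by ring, pow_add, pow_add, pow_add, pow_one]
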